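/- Let K be an infinite field and n, r ≥ 1. Let s ∈ {1,…,n} and t ∈ ℤ. (i) If t ≠ s, then D_{s,t} = Σ_{i∈R'} ξ_{i⌢s, i⌢t}, where R' ⊆ I(n,r−1) is any set containing exactly one element of each orbit of the place-permutation action of Σ_{r−1} on I(n,r−1), and i⌢z denotes the r-tuple obtained by appending z ∈ ℤ to i. (ii) D_{s,s} = Σ_{i∈R} λ_{i,s} · ξ_{i,i}, where R ⊆ I(n,r) is any set containing exactly one element of each Σ_r-orbit of I(n,r) and λ_{i,s} ∈ ℕ is the number of entries of i equal to s, cast into K. (Both R' and R are finite.) -/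

import Mathlib

noncomputable section

namespace AffineSchur

variable (K : Type*) [Field K] (n r : ℕ)

/-- The right action of the pair `(σ,ε) ∈ Σ̂_r = Σ_r ⋉ ℤ^r` on `I(ℤ,r)`:
`i·(σ,ε) = i∘σ + n·ε`. -/
def act (σ : Equiv.Perm (Fin r)) (ε : Fin r → ℤ) (i : Fin r → ℤ) : Fin r → ℤ :=
  fun k => i (σ k) + n * ε k

/-- The tensor space `Ẽ^{⊗r}`: the free `K`-module with basis `(v_i)_{i ∈ I(ℤ,r)}`. -/
abbrev TensorSpace := (Fin r → ℤ) →₀ K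

/-- The right-translation operator `T_{σ,ε} : v_i ↦ v_{i·(σ,ε)}`. -/
def transOp (σ : Equiv.Perm (Fin r)) (ε : Fin r → ℤ) :
    Module.End K (TensorSpace K r) :=
  Finsupp.lmapDomain K K (act n r σ ε)

/-- The finite set `{k : (k,l) lies in the Σ̂_r-orbit of (i,j)}`. -/
def xiSupport (i j l : Fin r → ℤ) : Finset (Fin r → ℤ) := by
  classical
  exact (Finset.univ.filter fun σ : Equiv.Perm (Fin r) =>
      ∀ k, (n : ℤ) ∣ (l k - j (σ k))).image
    fun σ => fun k => i (σ k) + (l k - j (σ k))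

/-- The operator `ξ_{i,j} ∈ End_K(Ẽ^{⊗r})` given by
`ξ_{i,j}(v_l) = Σ_{k : (k,l) in the Σ̂_r-orbit of (i,j)} v_k`. -/
def xi (i j : Fin r → ℤ) : Module.End K (TensorSpace K r) :=
  Finsupp.lsum K fun l => LinearMap.toSpanSingleton K _
    (∑ k ∈ xiSupport n r i j l, Finsupp.single k (1 : K))

/-- The centralizer algebra `End_{KΣ̂_r}(Ẽ^{⊗r})` of all the translation operators
`T_{σ,ε}` inside `End_K(Ẽ^{⊗r})` — the affine Schur algebra `S̃(n,r)`. -/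
def affineSchur : Subalgebra K (Module.End K (TensorSpace K r)) :=
  Subalgebra.centralizer K
    (Set.range fun p : Equiv.Perm (Fin r) × (Fin r → ℤ) => transOp K n r p.1 p.2)


/-- The operator D_{s,t} ∈ End_K(Ẽ^{⊗r}) (the action of the loop-algebra element
E_{st} ∈ gl_n[t,t⁻¹]): D_{s,t}(v_q) = Σ_{k=1}^{r} [q_k ≡ t (mod n)] · v_{q^k}, where q^k
is obtained from q by replacing its k-th entry q_k by q_k + s − t. -/
def Dop (s t : ℤ) : Module.End K (TensorSpace K r) := by
  classical
  exact Finsupp.lsum K fun q => LinearMap.toSpanSingleton K _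
    (∑ k : Fin r, if (n : ℤ) ∣ (q k - t) then
        Finsupp.single (Function.update q k (q k + s - t)) (1 : K) else 0)

/-- Appending an integer z to a tuple i ∈ I(ℤ,r−1), giving a tuple in I(ℤ,r)
(z is placed at the last position). -/
def app (i : Fin (r - 1) → ℤ) (z : ℤ) : Fin r → ℤ :=
  fun k => if h : (k : ℕ) < r - 1 then i ⟨k, h⟩ else z


/-! ### Auxiliary lemmas -/

/-- residue representative of `z` in `{1,...,n}` -/
def res (n : ℕ) (z : ℤ) : ℤ := (z - 1) % n + 1

lemma res_mem (n : ℕ) (hn : 1 ≤ n) (z : ℤ) : 1 ≤ res n z ∧ res n z ≤ n := by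
  have h0 : (0:ℤ) < (n:ℤ) := by exact_mod_cast hn
  have h1 := Int.emod_nonneg (z - 1) h0.ne'
  have h2 := Int.emod_lt_of_pos (z - 1) h0
  unfold res; omega

lemma res_dvd (n : ℕ) (z : ℤ) : (n:ℤ) ∣ z - res n z := by
  unfold res
  have h := Int.emod_def (z - 1) (n:ℤ)
  exact ⟨(z-1)/n, by omega⟩

lemma res_eq_iff (n : ℕ) (hn : 1 ≤ n) (z w : ℤ) (hw1 : 1 ≤ w) (hw2 : w ≤ n) :
    res n z = w ↔ (n:ℤ) ∣ z - w := by
  constructor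
  · rintro rfl; exact res_dvd n z
  · intro h
    have h2 := res_dvd n z
    have h3 : (n:ℤ) ∣ res n z - w := by
      have := dvd_sub h2 h
      have e : z - res n z - (z - w) = -(res n z - w) := by ring
      rw [e] at this
      exact (dvd_neg.mp this)
    have hb := res_mem n hn z
    rcases h3 with ⟨c, hc⟩
    have hc0 : c = 0 := by
      rcases lt_trichotomy c 0 with h'|h'|h'
      · nlinarith [hb.1, hb.2]
      · exact h'
      · nlinarith [hb.1, hb.2]
    rw [hc0, mul_zero] at hc; linarith

def emb (r : ℕ) : Fin (r-1) ≃ {k : Fin r // (k:ℕ) < r - 1} where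
  toFun p := ⟨⟨p.1, lt_of_lt_of_le p.2 (Nat.sub_le r 1)⟩, p.2⟩
  invFun q := ⟨q.1.1, q.2⟩
  left_inv _ := rfl
  right_inv _ := rfl

def lastI {r : ℕ} (hr : 1 ≤ r) : Fin r := ⟨r - 1, Nat.sub_lt hr one_pos⟩

lemma lt_iff_ne_last {r : ℕ} (hr : 1 ≤ r) (k : Fin r) :
    (k:ℕ) < r - 1 ↔ k ≠ lastI hr := by
  rw [Ne, Fin.ext_iff]
  have := k.isLt
  simp only [lastI]
  omega

lemma app_of_lt {r : ℕ} (i : Fin (r-1) → ℤ) (z : ℤ) (k : Fin r) (h : (k:ℕ) < r - 1) :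
    app r i z k = i ⟨k, h⟩ := dif_pos h

lemma app_last {r : ℕ} (hr : 1 ≤ r) (i : Fin (r-1) → ℤ) (z : ℤ) :
    app r i z (lastI hr) = z := by
  refine dif_neg ?_
  simp [lastI]

lemma mem_xiSupport {n r : ℕ} {i j l m : Fin r → ℤ} :
    m ∈ xiSupport n r i j l ↔ ∃ σ : Equiv.Perm (Fin r),
      (∀ k, (n:ℤ) ∣ l k - j (σ k)) ∧ m = fun k => i (σ k) + (l k - j (σ k)) := by
  classical
  simp [xiSupport, eq_comm]

lemma xiSupport_forward {n r : ℕ} (hr : 1 ≤ r) {s t : ℤ} (i : Fin (r-1) → ℤ)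
    {l m : Fin r → ℤ} (hm : m ∈ xiSupport n r (app r i s) (app r i t) l) :
    ∃ k₀ : Fin r, (n:ℤ) ∣ l k₀ - t ∧ m = Function.update l k₀ (l k₀ + s - t) := by
  obtain ⟨σ, hd, hmeq⟩ := mem_xiSupport.mp hm
  refine ⟨σ.symm (lastI hr), ?_, ?_⟩
  · have := hd (σ.symm (lastI hr))
    rwa [σ.apply_symm_apply, app_last hr] at this
  · funext k
    rw [Function.update_apply]
    by_cases hk : k = σ.symm (lastI hr)
    · subst hk
      rw [if_pos rfl]
      simp only [hmeq, σ.apply_symm_apply, app_last hr]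
      ring
    · have hσk : σ k ≠ lastI hr := by
        intro h; exact hk (by rw [← h, σ.symm_apply_apply])
      have hlt : ((σ k : Fin r):ℕ) < r - 1 := (lt_iff_ne_last hr _).mpr hσk
      rw [if_neg hk]
      simp only [hmeq, app_of_lt i s _ hlt, app_of_lt i t _ hlt]
      ring

/-- the reduced residue tuple of `l` avoiding position `k₀` -/
def jres (n r : ℕ) (hr : 1 ≤ r) (l : Fin r → ℤ) (k₀ : Fin r) : Fin (r-1) → ℤ :=
  fun p => res n (l (Equiv.swap k₀ (lastI hr) ((emb r p).1)))

lemma jres_mem {n r : ℕ} (hn : 1 ≤ n) (hr : 1 ≤ r) (l : Fin r → ℤ) (k₀ : Fin r)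
    (p : Fin (r-1)) :
    1 ≤ jres n r hr l k₀ p ∧ jres n r hr l k₀ p ≤ n := res_mem n hn _

lemma crit_mp {n r : ℕ} (hn : 1 ≤ n) (hr : 1 ≤ r) {s t : ℤ} (hst : t ≠ s)
    {i : Fin (r-1) → ℤ} (hib : ∀ p, 1 ≤ i p ∧ i p ≤ (n:ℤ))
    {l : Fin r → ℤ} {k₀ : Fin r}
    (hmem : Function.update l k₀ (l k₀ + s - t) ∈ xiSupport n r (app r i s) (app r i t) l) :
    ∃ π : Equiv.Perm (Fin (r-1)), i = jres n r hr l k₀ ∘ π := by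
  classical
  obtain ⟨σ, hd, hmeq⟩ := mem_xiSupport.mp hmem
  set lst := lastI hr with hlst
  have hσk₀ : σ k₀ = lst := by
    set k₁ := σ.symm lst with hk₁
    have h1 : Function.update l k₀ (l k₀ + s - t) k₁
        = app r i s (σ k₁) + (l k₁ - app r i t (σ k₁)) := by rw [hmeq]
    rw [σ.apply_symm_apply, app_last hr, app_last hr] at h1
    by_cases hk : k₁ = k₀
    · rw [← hk]; rw [hk₁]; exact σ.apply_symm_apply lst
    · rw [Function.update_of_ne hk] at h1
      exfalso; apply hst; linarith
  set τ := Equiv.swap k₀ lst with hτ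
  set μ := σ.symm.trans τ with hμdef
  have hμlast : μ lst = lst := by
    simp only [hμdef, Equiv.trans_apply]
    rw [show σ.symm lst = k₀ from by rw [← hσk₀, σ.symm_apply_apply], hτ]
    exact Equiv.swap_apply_left _ _
  have hμ : ∀ k : Fin r, (k:ℕ) < r - 1 ↔ ((μ k : Fin r):ℕ) < r - 1 := by
    intro k
    rw [lt_iff_ne_last hr, lt_iff_ne_last hr]
    constructor
    · intro h hc; exact h (μ.injective (hc.trans hμlast.symm))
    · intro h hc; exact h (by rw [hc, hμlast])
  refine ⟨(Equiv.permCongr (emb r)).symm (Equiv.Perm.subtypePerm μ (fun k => (hμ k).symm)), ?_⟩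
  funext p
  have hπp : (emb r ((Equiv.permCongr (emb r)).symm (Equiv.Perm.subtypePerm μ (fun k => (hμ k).symm)) p)).1
      = μ ((emb r p).1) := by
    simp [Equiv.permCongr_apply, Equiv.Perm.subtypePerm_apply]
  simp only [Function.comp_apply, jres, hπp]
  have hττ : τ (μ ((emb r p).1)) = σ.symm ((emb r p).1) := by
    simp only [hμdef, Equiv.trans_apply]
    exact Equiv.swap_apply_self _ _ _
  rw [hττ]
  set k := σ.symm ((emb r p).1) with hk
  have hσk : σ k = (emb r p).1 := σ.apply_symm_apply _
  have hlt : ((σ k : Fin r):ℕ) < r - 1 := by rw [hσk]; exact p.2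
  have := hd k
  rw [app_of_lt i t _ hlt] at this
  have hfin : (⟨((σ k : Fin r):ℕ), hlt⟩ : Fin (r-1)) = p := by
    apply Fin.ext
    show ((σ k : Fin r):ℕ) = (p:ℕ)
    rw [hσk]; rfl
  rw [hfin] at this
  exact ((res_eq_iff n hn (l k) (i p) (hib p).1 (hib p).2).mpr this).symm

lemma crit_mpr {n r : ℕ} (hn : 1 ≤ n) (hr : 1 ≤ r) {s t : ℤ}
    {i : Fin (r-1) → ℤ}
    {l : Fin r → ℤ} {k₀ : Fin r} (hk₀ : (n:ℤ) ∣ l k₀ - t)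
    (π : Equiv.Perm (Fin (r-1))) (hiπ : i = jres n r hr l k₀ ∘ π) :
    Function.update l k₀ (l k₀ + s - t) ∈ xiSupport n r (app r i s) (app r i t) l := by
  classical
  set lst := lastI hr with hlst
  set τ := Equiv.swap k₀ lst with hτ
  set σ := τ.trans (Equiv.Perm.extendDomain π⁻¹ (emb r)) with hσdef
  have hσk₀ : σ k₀ = lst := by
    simp only [hσdef, Equiv.trans_apply, hτ, Equiv.swap_apply_left]
    refine Equiv.Perm.extendDomain_apply_not_subtype _ _ ?_
    rw [lt_iff_ne_last hr]; simp [hlst]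
  have hσne : ∀ k : Fin r, k ≠ k₀ → ((σ k : Fin r):ℕ) < r - 1 ∧
      app r i t (σ k) = res n (l k) ∧ app r i s (σ k) = res n (l k) := by
    intro k hk
    have hτk : (τ k : Fin r) ≠ lst := by
      intro hc
      apply hk
      have : τ k = τ k₀ := by rw [hc, hτ, Equiv.swap_apply_left]
      exact τ.injective this
    have hτlt : ((τ k : Fin r):ℕ) < r - 1 := (lt_iff_ne_last hr _).mpr hτk
    have hσk : σ k = ((emb r) (π⁻¹ ((emb r).symm ⟨τ k, hτlt⟩))).1 := by
      simp only [hσdef, Equiv.trans_apply]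
      exact Equiv.Perm.extendDomain_apply_subtype π⁻¹ (emb r) (b := τ k) hτlt
    set q := π⁻¹ ((emb r).symm ⟨τ k, hτlt⟩) with hq
    have hlt : ((σ k : Fin r):ℕ) < r - 1 := by rw [hσk]; exact q.2
    have hfin : (⟨((σ k : Fin r):ℕ), hlt⟩ : Fin (r-1)) = q := by
      apply Fin.ext
      show ((σ k : Fin r):ℕ) = (q:ℕ)
      rw [hσk]; rfl
    have hiq : i q = res n (l k) := by
      rw [hiπ]
      simp only [Function.comp_apply, hq, Equiv.Perm.coe_inv, Equiv.apply_symm_apply]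
      simp only [jres]
      congr 1
      have : ((emb r) ((emb r).symm ⟨τ k, hτlt⟩)).1 = τ k := by
        rw [Equiv.apply_symm_apply]
      rw [this, hτ]
      exact congrArg l (Equiv.swap_apply_self _ _ _)
    refine ⟨hlt, ?_, ?_⟩
    · rw [app_of_lt i t _ hlt, hfin, hiq]
    · rw [app_of_lt i s _ hlt, hfin, hiq]
  rw [mem_xiSupport]
  refine ⟨σ, ?_, ?_⟩
  · intro k
    by_cases hk : k = k₀
    · subst hk; rw [hσk₀, app_last hr]; exact hk₀
    · rw [(hσne k hk).2.1]; exact res_dvd n (l k)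
  · funext k
    rw [Function.update_apply]
    by_cases hk : k = k₀
    · subst hk
      rw [if_pos rfl, hσk₀, app_last hr, app_last hr]
      ring
    · rw [if_neg hk, (hσne k hk).2.1, (hσne k hk).2.2]
      ring

lemma key1 {n r : ℕ} (K : Type*) [Field K] (hn : 1 ≤ n) (hr : 1 ≤ r) {s t : ℤ}
    (hst : t ≠ s)
    (R' : Finset (Fin (r-1) → ℤ))
    (hRb : ∀ i ∈ R', ∀ k, 1 ≤ i k ∧ i k ≤ (n:ℤ))
    (hRu : ∀ j : Fin (r-1) → ℤ, (∀ k, 1 ≤ j k ∧ j k ≤ (n:ℤ)) →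
      ∃! i, i ∈ R' ∧ ∃ σ : Equiv.Perm (Fin (r-1)), i = j ∘ σ)
    (l : Fin r → ℤ) :
    (∑ k : Fin r, if (n:ℤ) ∣ (l k - t) then
        Finsupp.single (Function.update l k (l k + s - t)) (1:K) else 0)
    = ∑ i ∈ R', ∑ m ∈ xiSupport n r (app r i s) (app r i t) l,
        Finsupp.single m (1:K) := by
  classical
  set u : Fin r → (Fin r → ℤ) := fun k => Function.update l k (l k + s - t) with hu
  set F : Finset (Fin r) := Finset.univ.filter (fun k : Fin r => (n:ℤ) ∣ l k - t) with hF
  set S : (Fin (r-1) → ℤ) → Finset (Fin r → ℤ) :=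
    fun i => xiSupport n r (app r i s) (app r i t) l with hS
  have huinj : ∀ k k', u k = u k' → k = k' := by
    intro k k' h
    by_contra hne
    have h1 : u k k' = l k' := Function.update_of_ne (Ne.symm hne) _ _
    have h2 : u k' k' = l k' + s - t := Function.update_self _ _ _
    rw [h, h2] at h1
    omega
  have step1 : (∑ k : Fin r, if (n:ℤ) ∣ (l k - t) then
      Finsupp.single (u k) (1:K) else 0) = ∑ k ∈ F, Finsupp.single (u k) (1:K) :=
    (Finset.sum_filter _ _).symm
  have step2 : ∑ k ∈ F, Finsupp.single (u k) (1:K)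
      = ∑ m ∈ F.image u, Finsupp.single m (1:K) :=
    by rw [Finset.sum_image (fun k _ k' _ h => huinj k k' h)]
  have hdisj : (↑R' : Set (Fin (r-1) → ℤ)).PairwiseDisjoint S := by
    intro i hi i' hi' hne
    rw [Function.onFun, Finset.disjoint_left]
    intro m hm hm'
    obtain ⟨k₀, hk₀, rfl⟩ := xiSupport_forward hr i hm
    obtain ⟨π, hπ⟩ := crit_mp hn hr hst (fun p => hRb i hi p) hm
    obtain ⟨π', hπ'⟩ := crit_mp hn hr hst (fun p => hRb i' hi' p) hm'
    obtain ⟨i₀, _, hiuniq⟩ := hRu (jres n r hr l k₀) (fun p => jres_mem hn hr l k₀ p)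
    exact hne (by rw [hiuniq i ⟨hi, π, hπ⟩, hiuniq i' ⟨hi', π', hπ'⟩])
  have hset : F.image u = R'.biUnion S := by
    ext m
    simp only [Finset.mem_image, Finset.mem_biUnion, hF, Finset.mem_filter,
      Finset.mem_univ, true_and]
    constructor
    · rintro ⟨k₀, hk₀, rfl⟩
      obtain ⟨i₀, ⟨hi₀R, π, hπ⟩, -⟩ :=
        hRu (jres n r hr l k₀) (fun p => jres_mem hn hr l k₀ p)
      exact ⟨i₀, hi₀R, crit_mpr hn hr hk₀ π hπ⟩
    · rintro ⟨i, hiR, hm⟩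
      obtain ⟨k₀, hk₀, rfl⟩ := xiSupport_forward hr i hm
      exact ⟨k₀, hk₀, rfl⟩
  calc (∑ k : Fin r, if (n:ℤ) ∣ (l k - t) then Finsupp.single (u k) (1:K) else 0)
      = ∑ m ∈ F.image u, Finsupp.single m (1:K) := step1.trans step2
    _ = ∑ m ∈ R'.biUnion S, Finsupp.single m (1:K) := by rw [hset]
    _ = ∑ i ∈ R', ∑ m ∈ S i, Finsupp.single m (1:K) := Finset.sum_biUnion hdisj

lemma xiSupport_diag_subset {n r : ℕ} (i l : Fin r → ℤ) :
    xiSupport n r i i l ⊆ {l} := by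
  intro m hm
  obtain ⟨σ, -, hmeq⟩ := mem_xiSupport.mp hm
  rw [Finset.mem_singleton, hmeq]
  funext k; ring

lemma xiSupport_diag_nonempty {n r : ℕ} (hn : 1 ≤ n) {i : Fin r → ℤ}
    (hib : ∀ p, 1 ≤ i p ∧ i p ≤ (n:ℤ)) (l : Fin r → ℤ) :
    (xiSupport n r i i l).Nonempty ↔
      ∃ π : Equiv.Perm (Fin r), i = (fun k => res n (l k)) ∘ π := by
  constructor
  · rintro ⟨m, hm⟩
    obtain ⟨σ, hd, -⟩ := mem_xiSupport.mp hm
    refine ⟨σ.symm, ?_⟩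
    funext p
    have := hd (σ.symm p)
    rw [σ.apply_symm_apply] at this
    simp only [Function.comp_apply]
    exact ((res_eq_iff n hn _ _ (hib p).1 (hib p).2).mpr this).symm
  · rintro ⟨π, hπ⟩
    refine ⟨fun k => i (π⁻¹ k) + (l k - i (π⁻¹ k)), ?_⟩
    rw [mem_xiSupport]
    refine ⟨π⁻¹, fun k => ?_, rfl⟩
    have : i (π⁻¹ k) = res n (l k) := by
      rw [hπ]; simp only [Function.comp_apply]
      congr 1
      exact congrArg l (Equiv.apply_symm_apply π k)
    rw [this]
    exact res_dvd n (l k)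

lemma key2 {n r : ℕ} (K : Type*) [Field K] (hn : 1 ≤ n) {s : ℤ} (hs1 : 1 ≤ s)
    (hs2 : s ≤ (n:ℤ))
    (R : Finset (Fin r → ℤ))
    (hRb : ∀ i ∈ R, ∀ k, 1 ≤ i k ∧ i k ≤ (n:ℤ))
    (hRu : ∀ j : Fin r → ℤ, (∀ k, 1 ≤ j k ∧ j k ≤ (n:ℤ)) →
      ∃! i, i ∈ R ∧ ∃ σ : Equiv.Perm (Fin r), i = j ∘ σ)
    (l : Fin r → ℤ) :
    (∑ k : Fin r, if (n:ℤ) ∣ (l k - s) then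
        Finsupp.single (Function.update l k (l k + s - s)) (1:K) else 0)
    = ∑ i ∈ R, ((Finset.univ.filter fun k => i k = s).card : K) •
        ∑ m ∈ xiSupport n r i i l, Finsupp.single m (1:K) := by
  classical
  have hup : ∀ k : Fin r, Function.update l k (l k + s - s) = l := by
    intro k
    rw [show l k + s - s = l k by ring]
    exact Function.update_eq_self k l
  set j : Fin r → ℤ := fun k => res n (l k) with hj
  have hjb : ∀ k, 1 ≤ j k ∧ j k ≤ (n:ℤ) := fun k => res_mem n hn _
  obtain ⟨i₀, ⟨hi₀R, π₀, hπ₀⟩, huniq⟩ := hRu j hjb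
  have hLHS : (∑ k : Fin r, if (n:ℤ) ∣ (l k - s) then
        Finsupp.single (Function.update l k (l k + s - s)) (1:K) else 0)
      = ((Finset.univ.filter fun k : Fin r => (n:ℤ) ∣ l k - s).card : K) •
        Finsupp.single l (1:K) := by
    simp only [hup]
    rw [← Finset.sum_filter, Finset.sum_const, ← Nat.cast_smul_eq_nsmul K]
  rw [hLHS]
  rw [Finset.sum_eq_single i₀]
  · have hne : (xiSupport n r i₀ i₀ l).Nonempty :=
      (xiSupport_diag_nonempty hn (fun p => hRb i₀ hi₀R p) l).mpr ⟨π₀, hπ₀⟩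
    have hsing : xiSupport n r i₀ i₀ l = {l} := by
      rcases Finset.subset_singleton_iff.mp (xiSupport_diag_subset i₀ l) with h | h
      · rw [h] at hne; exact absurd hne Finset.not_nonempty_empty
      · exact h
    rw [hsing, Finset.sum_singleton]
    have hfe : (Finset.univ.filter fun k : Fin r => (n:ℤ) ∣ l k - s)
        = Finset.univ.filter fun k : Fin r => j k = s := by
      apply Finset.filter_congr
      intro k _
      exact Iff.symm (res_eq_iff n hn (l k) s hs1 hs2)
    have hcard : (Finset.univ.filter fun k : Fin r => j k = s).card
        = (Finset.univ.filter fun k : Fin r => i₀ k = s).card := by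
      apply Finset.card_bij' (fun k _ => π₀.symm k) (fun k _ => π₀ k)
      · intro k hk
        simp only [Finset.mem_filter, Finset.mem_univ, true_and] at hk ⊢
        rw [hπ₀]
        simpa using hk
      · intro k hk
        simp only [Finset.mem_filter, Finset.mem_univ, true_and] at hk ⊢
        rw [hπ₀] at hk
        exact hk
      · intro k _; exact π₀.apply_symm_apply k
      · intro k _; exact π₀.symm_apply_apply k
    rw [hfe, hcard]
  · intro i hiR hne
    have hempty : xiSupport n r i i l = ∅ := by
      by_contra h
      have hne' : (xiSupport n r i i l).Nonempty := Finset.nonempty_iff_ne_empty.mpr h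
      obtain ⟨π, hπ⟩ := (xiSupport_diag_nonempty hn (fun p => hRb i hiR p) l).mp hne'
      exact hne (huniq i ⟨hiR, π, hπ⟩)
    rw [hempty, Finset.sum_empty, smul_zero]
  · intro h; exact absurd hi₀R h


/-- for s ∈ {1,…,n} and t ∈ ℤ:
(i) if t ≠ s then D_{s,t} = Σ_{i∈R'} ξ_{i⌢s, i⌢t} for any set R' of representatives of
the Σ_{r−1}-orbits of I(n,r−1);
(ii) D_{s,s} = Σ_{i∈R} λ_{i,s} ξ_{i,i} for any set R of representatives of the
Σ_r-orbits of I(n,r), where λ_{i,s} is the number of entries of i equal to s. -/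
theorem Dop_eq_sum_xi (K : Type*) [Field K] [Infinite K]
    (n r : ℕ) (hn : 1 ≤ n) (hr : 1 ≤ r)
    (s : ℤ) (hs1 : 1 ≤ s) (hs2 : s ≤ (n : ℤ)) :
    (∀ t : ℤ, t ≠ s →
      ∀ R' : Finset (Fin (r - 1) → ℤ),
        (∀ i ∈ R', ∀ k, 1 ≤ i k ∧ i k ≤ (n : ℤ)) →
        (∀ j : Fin (r - 1) → ℤ, (∀ k, 1 ≤ j k ∧ j k ≤ (n : ℤ)) →
          ∃! i, i ∈ R' ∧ ∃ σ : Equiv.Perm (Fin (r - 1)), i = j ∘ σ) →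
        Dop K n r s t = ∑ i ∈ R', xi K n r (app r i s) (app r i t)) ∧
    (∀ R : Finset (Fin r → ℤ),
      (∀ i ∈ R, ∀ k, 1 ≤ i k ∧ i k ≤ (n : ℤ)) →
      (∀ j : Fin r → ℤ, (∀ k, 1 ≤ j k ∧ j k ≤ (n : ℤ)) →
        ∃! i, i ∈ R ∧ ∃ σ : Equiv.Perm (Fin r), i = j ∘ σ) →
      Dop K n r s s = ∑ i ∈ R,
        (((Finset.univ.filter fun k => i k = s).card : K)) • xi K n r i i) := by
  classical
  constructor
  · intro t ht R' hRb hRu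
    refine Finsupp.lhom_ext fun l b => ?_
    have hL : Dop K n r s t (Finsupp.single l b)
        = b • (∑ k : Fin r, if (n : ℤ) ∣ (l k - t) then
            Finsupp.single (Function.update l k (l k + s - t)) (1:K) else 0) := by
      simp [Dop, Finsupp.lsum_single, LinearMap.toSpanSingleton_apply]
    have hR : (∑ i ∈ R', xi K n r (app r i s) (app r i t)) (Finsupp.single l b)
        = ∑ i ∈ R', b • ∑ m ∈ xiSupport n r (app r i s) (app r i t) l,
            Finsupp.single m (1:K) := by
      simp [xi, Finsupp.lsum_single, LinearMap.toSpanSingleton_apply,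
        LinearMap.sum_apply]
    rw [hL, hR, ← Finset.smul_sum]
    congr 1
    exact key1 K (by omega) hr ht R' hRb hRu l
  · intro R hRb hRu
    refine Finsupp.lhom_ext fun l b => ?_
    have hL : Dop K n r s s (Finsupp.single l b)
        = b • (∑ k : Fin r, if (n : ℤ) ∣ (l k - s) then
            Finsupp.single (Function.update l k (l k + s - s)) (1:K) else 0) := by
      simp [Dop, Finsupp.lsum_single, LinearMap.toSpanSingleton_apply]
    have hR : (∑ i ∈ R, ((Finset.univ.filter fun k => i k = s).card : K) •
          xi K n r i i) (Finsupp.single l b)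
        = ∑ i ∈ R, ((Finset.univ.filter fun k => i k = s).card : K) •
            (b • ∑ m ∈ xiSupport n r i i l, Finsupp.single m (1:K)) := by
      simp [xi, Finsupp.lsum_single, LinearMap.toSpanSingleton_apply,
        LinearMap.sum_apply, LinearMap.smul_apply]
    have hcomm : (∑ i ∈ R, ((Finset.univ.filter fun k => i k = s).card : K) •
            (b • ∑ m ∈ xiSupport n r i i l, Finsupp.single m (1:K)))
        = b • ∑ i ∈ R, ((Finset.univ.filter fun k => i k = s).card : K) •
            ∑ m ∈ xiSupport n r i i l, Finsupp.single m (1:K) := by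
      rw [Finset.smul_sum]
      exact Finset.sum_congr rfl (fun i _ => smul_comm _ _ _)
    rw [hL, hR, hcomm]
    congr 1
    exact key2 K (by omega) hs1 hs2 R hRb hRu l


end AffineSchur
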